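/- Let S be a finite set of open unit hemispheres. If the union of S covers a closed unit hemisphere H̄ of the unit sphere S^2, then there exists a subset R of S of cardinality 3, 4, or 5 whose union still covers H̄. -/

import Mathlib

open scoped RealInnerProductSpace

/-- The unit sphere `S² ⊆ ℝ³`. -/
noncomputable def unitSphere : Set (EuclideanSpace ℝ (Fin 3)) := Metric.sphere 0 1

/-- The open unit hemisphere of `S²` determined by a (unit) vector `v`. -/
noncomputable def openHemisphere (v : EuclideanSpace ℝ (Fin 3)) :
    Set (EuclideanSpace ℝ (Fin 3)) := {x ∈ unitSphere | 0 < ⟪v, x⟫}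

/-- The closed unit hemisphere of `S²` determined by a (unit) vector `v`. -/
noncomputable def closedHemisphere (v : EuclideanSpace ℝ (Fin 3)) :
    Set (EuclideanSpace ℝ (Fin 3)) := {x ∈ unitSphere | 0 ≤ ⟪v, x⟫}


open Module Submodule

variable {M : Type*} [AddCommGroup M] [Module ℝ M]

/-- Carathéodory for cones. -/
lemma cone_cara : ∀ (n : ℕ) (T : Finset M), T.card ≤ n → ∀ f : M → ℝ, (∀ v ∈ T, 0 ≤ f v) →
    ∃ T', T' ⊆ T ∧ LinearIndependent ℝ ((↑) : T' → M) ∧ ∃ g : M → ℝ,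
      (∀ v ∈ T', 0 < g v) ∧ (∑ v ∈ T', g v • v) = ∑ v ∈ T, f v • v := by
  intro n
  induction n with
  | zero =>
    intro T hT f _
    rw [Nat.le_zero, Finset.card_eq_zero] at hT
    subst hT
    exact ⟨∅, Finset.Subset.refl _, linearIndependent_empty_type, 1, by simp, by simp⟩
  | succ n ih =>
    intro T hT f hf
    classical
    set T₁ := T.filter (fun v => f v ≠ 0) with hT₁def
    have hT₁sub : T₁ ⊆ T := Finset.filter_subset _ _
    have h₁pos : ∀ v ∈ T₁, 0 < f v := by
      intro v hv
      rw [hT₁def, Finset.mem_filter] at hv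
      exact lt_of_le_of_ne (hf v hv.1) (Ne.symm hv.2)
    have hsum₁ : ∑ v ∈ T₁, f v • v = ∑ v ∈ T, f v • v := by
      apply Finset.sum_subset hT₁sub
      intro v hv hnv
      rw [hT₁def, Finset.mem_filter, not_and, not_not] at hnv
      rw [hnv hv, zero_smul]
    by_cases hind : LinearIndependent ℝ ((↑) : T₁ → M)
    · exact ⟨T₁, hT₁sub, hind, f, h₁pos, hsum₁⟩
    · -- get a dependency with some positive coefficient
      obtain ⟨G, hGsum, v₁, hv₁T, hv₁⟩ : ∃ G : M → ℝ,
          (∑ v ∈ T₁, G v • v = 0) ∧ ∃ v ∈ T₁, 0 < G v := by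
        obtain ⟨g, hgsum, i, hgi⟩ := Fintype.not_linearIndependent_iff.mp hind
        rcases hgi.lt_or_gt with hneg | hpos
        · refine ⟨fun v => if h : v ∈ T₁ then -g ⟨v, h⟩ else 0, ?_, i, i.2, by simp [hneg]⟩
          rw [← Finset.sum_attach T₁ (fun v => (if h : v ∈ T₁ then -g ⟨v, h⟩ else 0) • v)]
          simp only [Finset.coe_mem, dif_pos, Subtype.coe_eta, neg_smul]
          simpa [Finset.univ_eq_attach] using congrArg Neg.neg hgsum
        · refine ⟨fun v => if h : v ∈ T₁ then g ⟨v, h⟩ else 0, ?_, i, i.2, by simp [hpos]⟩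
          rw [← Finset.sum_attach T₁ (fun v => (if h : v ∈ T₁ then g ⟨v, h⟩ else 0) • v)]
          simp only [Finset.coe_mem, dif_pos, Subtype.coe_eta]
          exact hgsum
      -- find the minimizer
      have hne : (T₁.filter (fun v => 0 < G v)).Nonempty := ⟨v₁, Finset.mem_filter.2 ⟨hv₁T, hv₁⟩⟩
      obtain ⟨v₀, hv₀mem, hv₀min⟩ :=
        Finset.exists_min_image (T₁.filter (fun v => 0 < G v)) (fun v => f v / G v) hne
      rw [Finset.mem_filter] at hv₀mem
      obtain ⟨hv₀T₁, hv₀G⟩ := hv₀mem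
      set r := f v₀ / G v₀ with hrdef
      have hr0 : 0 ≤ r := div_nonneg (hf v₀ (hT₁sub hv₀T₁)) hv₀G.le
      set f' : M → ℝ := fun v => f v - r * G v with hf'def
      have hf'nonneg : ∀ v ∈ T₁, 0 ≤ f' v := by
        intro v hv
        by_cases hGv : 0 < G v
        · have := hv₀min v (Finset.mem_filter.2 ⟨hv, hGv⟩)
          have : r * G v ≤ f v := (le_div_iff₀ hGv).mp this
          simp [hf'def]; linarith
        · push_neg at hGv
          have : r * G v ≤ 0 := mul_nonpos_of_nonneg_of_nonpos hr0 hGv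
          have := (h₁pos v hv).le
          simp [hf'def]; linarith
      have hf'v₀ : f' v₀ = 0 := by
        simp [hf'def, hrdef]
        field_simp
        ring
      have hsum' : ∑ v ∈ T₁, f' v • v = ∑ v ∈ T, f v • v := by
        simp only [hf'def, sub_smul, Finset.sum_sub_distrib, mul_smul]
        rw [← Finset.smul_sum, hGsum, smul_zero, sub_zero, hsum₁]
      -- recurse
      have hcard : (T₁.erase v₀).card ≤ n := by
        have h1 : (T₁.erase v₀).card < T₁.card := Finset.card_erase_lt_of_mem hv₀T₁
        have h2 : T₁.card ≤ T.card := Finset.card_le_card hT₁sub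
        omega
      have hsum'' : ∑ v ∈ T₁.erase v₀, f' v • v = ∑ v ∈ T, f v • v := by
        rw [Finset.sum_erase _ (by rw [hf'v₀, zero_smul]), hsum']
      obtain ⟨T', hT'sub, hT'ind, g, hgpos, hgsum⟩ :=
        ih (T₁.erase v₀) hcard f' (fun v hv => hf'nonneg v (Finset.mem_of_mem_erase hv))
      exact ⟨T', hT'sub.trans ((Finset.erase_subset _ _).trans hT₁sub), hT'ind, g, hgpos,
        by rw [hgsum, hsum'']⟩


open scoped RealInnerProductSpace
open Module Submodule

variable {E : Type*} [NormedAddCommGroup E] [InnerProductSpace ℝ E] [FiniteDimensional ℝ E]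

def coneOf (T : Finset E) : Set E :=
  {x | ∃ f : E → ℝ, (∀ v ∈ T, 0 ≤ f v) ∧ x = ∑ v ∈ T, f v • v}

lemma zero_mem_coneOf (T : Finset E) : (0:E) ∈ coneOf T :=
  ⟨0, fun _ _ => le_refl _, by simp⟩

lemma mem_coneOf_self {T : Finset E} {v : E} (hv : v ∈ T) : v ∈ coneOf T := by
  classical
  refine ⟨fun w => if w = v then 1 else 0, fun w _ => by positivity, ?_⟩
  rw [Finset.sum_eq_single v (fun w _ hw => by simp [hw]) (fun h => absurd hv h)]
  simp

lemma coneOf_subset {T T' : Finset E} (h : T' ⊆ T) : coneOf T' ⊆ coneOf T := by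
  classical
  rintro x ⟨f, hf, rfl⟩
  refine ⟨fun v => if v ∈ T' then f v else 0, fun v _ => by by_cases hv : v ∈ T' <;> simp [hv] <;> exact hf v hv, ?_⟩
  rw [← Finset.sum_subset h (fun v _ hv => by simp [hv])]
  exact Finset.sum_congr rfl fun v hv => by simp [hv]

lemma isClosed_coneOf_indep (T' : Finset E) (hind : LinearIndependent ℝ ((↑) : T' → E)) :
    IsClosed (coneOf T') := by
  classical
  set L : (↥T' → ℝ) →ₗ[ℝ] E :=
    { toFun := fun g => ∑ i : ↥T', g i • (i : E)
      map_add' := by intro a b; simp [add_smul, Finset.sum_add_distrib]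
      map_smul' := by intro c a; simp [smul_smul, Finset.smul_sum] } with hLdef
  have hker : LinearMap.ker L = ⊥ := by
    rw [LinearMap.ker_eq_bot']
    intro g hg
    exact funext (Fintype.linearIndependent_iff.mp hind g hg)
  have hemb := LinearMap.isClosedEmbedding_of_injective hker
  have himage : coneOf T' = L '' {g : ↥T' → ℝ | ∀ i, 0 ≤ g i} := by
    ext x
    constructor
    · rintro ⟨f, hf, rfl⟩
      refine ⟨fun i => f i, fun i => hf i i.2, ?_⟩
      show ∑ i : ↥T', f i • (i : E) = _
      rw [Finset.univ_eq_attach, Finset.sum_attach T' (fun v => f v • v)]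
    · rintro ⟨g, hg, rfl⟩
      refine ⟨fun v => if h : v ∈ T' then g ⟨v, h⟩ else 0, fun v hv => by simp [hv, hg ⟨v, hv⟩], ?_⟩
      show ∑ i : ↥T', g i • (i : E) = _
      rw [← Finset.sum_attach T' (fun v => (if h : v ∈ T' then g ⟨v, h⟩ else 0) • v)]
      simp [Finset.univ_eq_attach]
  rw [himage]
  apply hemb.isClosedMap
  have : {g : ↥T' → ℝ | ∀ i, 0 ≤ g i} = ⋂ i, {g : ↥T' → ℝ | 0 ≤ g i} := by
    ext g; simp [Set.mem_iInter]
  rw [this]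
  exact isClosed_iInter fun i => isClosed_le continuous_const (continuous_apply i)

lemma isClosed_coneOf (T : Finset E) : IsClosed (coneOf T) := by
  classical
  have hfin : {T' : Finset E | T' ⊆ T ∧ LinearIndependent ℝ ((↑) : T' → E)}.Finite := by
    apply Set.Finite.subset (Finset.finite_toSet T.powerset)
    intro T' hT'
    simpa [Finset.mem_powerset] using hT'.1
  have heq : coneOf T =
      ⋃ T' ∈ {T' : Finset E | T' ⊆ T ∧ LinearIndependent ℝ ((↑) : T' → E)}, coneOf T' := by
    ext x
    simp only [Set.mem_iUnion, Set.mem_setOf_eq, exists_prop]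
    constructor
    · rintro ⟨f, hf, rfl⟩
      obtain ⟨T', hsub, hind, g, hgpos, hgsum⟩ := cone_cara T.card T (le_refl _) f hf
      exact ⟨T', ⟨hsub, hind⟩, g, fun v hv => (hgpos v hv).le, hgsum.symm⟩
    · rintro ⟨T', ⟨hsub, _⟩, hx⟩
      exact coneOf_subset hsub hx
  rw [heq]
  exact hfin.isClosed_biUnion fun T' hT' => isClosed_coneOf_indep T' hT'.2

lemma farkas [CompleteSpace E] (T : Finset E) (z : E) (hz : z ∉ coneOf T) :
    ∃ y : E, (∀ v ∈ T, ⟪v, y⟫ ≤ 0) ∧ 0 < ⟪z, y⟫ := by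
  set K : ConvexCone ℝ E :=
    { carrier := coneOf T
      smul_mem' := by
        rintro c hc x ⟨f, hf, rfl⟩
        exact ⟨fun v => c * f v, fun v hv => mul_nonneg hc.le (hf v hv),
          by rw [Finset.smul_sum]; exact Finset.sum_congr rfl fun v _ => by simp [smul_smul]⟩
      add_mem' := by
        rintro x ⟨f, hf, rfl⟩ y ⟨g, hg, rfl⟩
        exact ⟨f + g, fun v hv => add_nonneg (hf v hv) (hg v hv),
          by rw [← Finset.sum_add_distrib]; exact Finset.sum_congr rfl fun v _ => by simp [add_smul]⟩ } with hKdef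
  let C : ProperCone ℝ E := ⟨⟨⟨⟨coneOf T, fun hx hy => K.add_mem' hx hy⟩, zero_mem_coneOf T⟩,
    by
      rintro c x ⟨f, hf, rfl⟩
      exact ⟨fun v => (c : ℝ) * f v, fun v hv => mul_nonneg c.2 (hf v hv),
        by show (c : ℝ) • ∑ v ∈ T, f v • v = _; rw [Finset.smul_sum]; exact Finset.sum_congr rfl fun v _ => by simp [smul_smul]⟩⟩,
    isClosed_coneOf T⟩
  have hsep := ProperCone.hyperplane_separation' C (x₀ := z) (show z ∉ C from hz)
  obtain ⟨y, hy1, hy2⟩ := hsep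
  refine ⟨-y, fun v hv => ?_, ?_⟩
  · have := hy1 v (mem_coneOf_self hv)
    rw [inner_neg_right]
    linarith
  · rw [inner_neg_right]
    have : ⟪z, y⟫ = ⟪y, z⟫ := real_inner_comm _ _
    linarith


open scoped RealInnerProductSpace
open Module Submodule

noncomputable section Geo

local notation "E3" => EuclideanSpace ℝ (Fin 3)

/-- The dual non-covering predicate. -/
def Good (u : E3) (R : Finset E3) : Prop :=
  ∀ x : E3, 0 ≤ ⟪u, x⟫ → (∀ v ∈ R, ⟪v, x⟫ ≤ 0) → x = 0

lemma good_mono {u : E3} {R R' : Finset E3} (h : R ⊆ R') (hR : Good u R) : Good u R' :=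
  fun x hx hvx => hR x hx (fun v hv => hvx v (h hv))

lemma inner_sum_smul (T : Finset E3) (g : E3 → ℝ) (x : E3) :
    ⟪∑ v ∈ T, g v • v, x⟫ = ∑ v ∈ T, g v * ⟪v, x⟫ := by
  rw [sum_inner]
  exact Finset.sum_congr rfl fun v _ => real_inner_smul_left v x (g v)

lemma pos_comb_zero {T : Finset E3} {g : E3 → ℝ} {x : E3} (hg : ∀ v ∈ T, 0 < g v)
    (hx : ∀ v ∈ T, ⟪v, x⟫ ≤ 0) (hsum : 0 ≤ ∑ v ∈ T, g v * ⟪v, x⟫) :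
    ∀ v ∈ T, ⟪v, x⟫ = 0 := by
  have hzero : ∑ v ∈ T, g v * ⟪v, x⟫ = 0 :=
    le_antisymm (Finset.sum_nonpos fun v hv => mul_nonpos_of_nonneg_of_nonpos (hg v hv).le (hx v hv)) hsum
  intro v hv
  have := (Finset.sum_eq_zero_iff_of_nonpos
    (fun w hw => mul_nonpos_of_nonneg_of_nonpos (hg w hw).le (hx w hw))).mp hzero v hv
  rcases mul_eq_zero.mp this with h | h
  · exact absurd h (hg v hv).ne'
  · exact h

lemma mem_orth_of_forall {V : Finset E3} {x : E3} (hx : ∀ v ∈ V, ⟪v, x⟫ = 0) :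
    x ∈ (span ℝ (V : Set E3))ᗮ := by
  have hsub : (V : Set E3) ⊆ ((ℝ ∙ x)ᗮ : Set E3) := by
    intro v hv
    rw [SetLike.mem_coe, Submodule.mem_orthogonal_singleton_iff_inner_right]
    rw [real_inner_comm]
    exact hx v hv
  have hle : span ℝ (V : Set E3) ≤ (ℝ ∙ x)ᗮ := Submodule.span_le.2 hsub
  exact Submodule.orthogonal_le hle
    (Submodule.le_orthogonal_orthogonal _ (Submodule.mem_span_singleton_self x))

lemma line_lemma {V : Finset E3} (h2 : finrank ℝ (span ℝ (V : Set E3)) = 2) :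
    ∃ m : E3, m ≠ 0 ∧ (∀ v ∈ V, ⟪v, m⟫ = 0) ∧
      ∀ x : E3, (∀ v ∈ V, ⟪v, x⟫ = 0) → ∃ t : ℝ, x = t • m := by
  set K := (span ℝ (V : Set E3))ᗮ with hKdef
  have hKrank : finrank ℝ K = 1 := by
    have := (span ℝ (V : Set E3)).finrank_add_finrank_orthogonal
    rw [h2, finrank_euclideanSpace_fin, ← hKdef] at this
    omega
  have hKne : K ≠ ⊥ := by
    intro h
    rw [h, finrank_bot] at hKrank
    exact absurd hKrank one_ne_zero.symm
  obtain ⟨m, hmK, hm0⟩ := Submodule.exists_mem_ne_zero_of_ne_bot hKne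
  refine ⟨m, hm0, fun v hv => inner_right_of_mem_orthogonal (Submodule.subset_span hv) hmK, ?_⟩
  intro x hx
  have hxK : x ∈ K := mem_orth_of_forall hx
  have hspan : span ℝ ({m} : Set E3) = K := by
    apply Submodule.eq_of_le_of_finrank_le
    · rw [Submodule.span_le, Set.singleton_subset_iff]; exact hmK
    · rw [hKrank, finrank_span_singleton hm0]
  rw [← hspan] at hxK
  obtain ⟨t, ht⟩ := Submodule.mem_span_singleton.mp hxK
  exact ⟨t, ht.symm⟩

end Geo


open scoped RealInnerProductSpace

noncomputable section CrossSec

local notation "E3" => EuclideanSpace ℝ (Fin 3)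

def cross3 (a b : E3) : E3 :=
  (WithLp.equiv 2 (Fin 3 → ℝ)).symm
    ![a 1 * b 2 - a 2 * b 1, a 2 * b 0 - a 0 * b 2, a 0 * b 1 - a 1 * b 0]

lemma cross3_apply (a b : E3) (i : Fin 3) :
    cross3 a b i = ![a 1 * b 2 - a 2 * b 1, a 2 * b 0 - a 0 * b 2, a 0 * b 1 - a 1 * b 0] i := by
  rw [cross3, WithLp.equiv_symm_apply]

lemma inner3 (x y : E3) : ⟪x, y⟫ = x 0 * y 0 + x 1 * y 1 + x 2 * y 2 := by
  rw [PiLp.inner_apply, Fin.sum_univ_three]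
  simp [RCLike.inner_apply]
  ring

lemma inner_cross3_left (a b : E3) : ⟪a, cross3 a b⟫ = 0 := by
  rw [inner3]
  simp only [cross3_apply, Matrix.cons_val_zero, Matrix.cons_val_one, Matrix.head_cons,
    Matrix.cons_val_two, Matrix.tail_cons]
  ring

lemma inner_cross3_right (a b : E3) : ⟪b, cross3 a b⟫ = 0 := by
  rw [inner3]
  simp only [cross3_apply, Matrix.cons_val_zero, Matrix.cons_val_one, Matrix.head_cons,
    Matrix.cons_val_two, Matrix.tail_cons]
  ring

lemma inner_cross3_swap (u a b : E3) : ⟪a, cross3 u b⟫ = -⟪b, cross3 u a⟫ := by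
  rw [inner3, inner3]
  simp only [cross3_apply, Matrix.cons_val_zero, Matrix.cons_val_one, Matrix.head_cons,
    Matrix.cons_val_two, Matrix.tail_cons]
  ring

lemma exists_perp_neg (u v₁ v₂ : E3) (hu : u ≠ 0) :
    ∃ x : E3, x ≠ 0 ∧ ⟪u, x⟫ = 0 ∧ ⟪v₁, x⟫ ≤ 0 ∧ ⟪v₂, x⟫ ≤ 0 := by
  by_cases h1 : cross3 u v₁ = 0
  · by_cases h2 : cross3 u v₂ = 0
    · -- both degenerate: pick a basis vector e with cross3 u e ≠ 0
      have he : ∃ e : E3, cross3 u e ≠ 0 := by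
        have hnz : ¬∀ i, u i = 0 := by
          intro h
          exact hu (WithLp.ofLp_injective 2 (funext h))
        push_neg at hnz
        by_cases h0 : u 0 ≠ 0
        · refine ⟨(WithLp.equiv 2 (Fin 3 → ℝ)).symm ![0, 1, 0], fun hc => h0 ?_⟩
          have := congrFun (congrArg (WithLp.equiv 2 (Fin 3 → ℝ)) hc) 2
          simpa [cross3_apply, WithLp.equiv_symm_apply] using this
        · push_neg at h0
          obtain ⟨i, hi⟩ := hnz
          refine ⟨(WithLp.equiv 2 (Fin 3 → ℝ)).symm ![1, 0, 0], fun hc => ?_⟩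
          have h1c := congrFun (congrArg (WithLp.equiv 2 (Fin 3 → ℝ)) hc) 1
          have h2c := congrFun (congrArg (WithLp.equiv 2 (Fin 3 → ℝ)) hc) 2
          simp [cross3_apply, WithLp.equiv_symm_apply] at h1c h2c
          fin_cases i <;> simp_all
      obtain ⟨e, he⟩ := he
      refine ⟨cross3 u e, he, inner_cross3_left u e, ?_, ?_⟩
      · rw [inner_cross3_swap, h1, inner_zero_right, neg_zero]
      · rw [inner_cross3_swap, h2, inner_zero_right, neg_zero]
    · refine ⟨cross3 u v₂, h2, inner_cross3_left u v₂, ?_, le_of_eq (inner_cross3_right u v₂)⟩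
      rw [inner_cross3_swap, h1, inner_zero_right, neg_zero]
  · by_cases h2 : ⟪v₂, cross3 u v₁⟫ ≤ 0
    · exact ⟨cross3 u v₁, h1, inner_cross3_left u v₁, le_of_eq (inner_cross3_right u v₁), h2⟩
    · push_neg at h2
      refine ⟨-cross3 u v₁, neg_ne_zero.2 h1, ?_, ?_, ?_⟩
      · rw [inner_neg_right, inner_cross3_left, neg_zero]
      · rw [inner_neg_right, inner_cross3_right, neg_zero]
      · rw [inner_neg_right]; linarith

end CrossSec


open scoped RealInnerProductSpace
open Module Submodule

noncomputable section MainSec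

local notation "E3" => EuclideanSpace ℝ (Fin 3)

lemma card_ge_three {S : Finset E3} {u : E3} (hu0 : u ≠ 0) (hQ : Good u S) : 3 ≤ S.card := by
  classical
  by_contra h
  push_neg at h
  obtain ⟨v₁, v₂, hv⟩ : ∃ v₁ v₂ : E3, ∀ v ∈ S, v = v₁ ∨ v = v₂ := by
    have h2 : S.card = 0 ∨ S.card = 1 ∨ S.card = 2 := by omega
    rcases h2 with hc | hc | hc
    · exact ⟨0, 0, by simp [Finset.card_eq_zero.mp hc]⟩
    · obtain ⟨v, rfl⟩ := Finset.card_eq_one.mp hc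
      exact ⟨v, v, by simp⟩
    · obtain ⟨v₁, v₂, hne, hSeq⟩ := Finset.card_eq_two.mp hc
      exact ⟨v₁, v₂, fun v hv => by
        rw [hSeq] at hv
        simpa using Finset.mem_insert.mp hv⟩
  obtain ⟨x, hx0, hxu, hx1, hx2⟩ := exists_perp_neg u v₁ v₂ hu0
  refine hx0 (hQ x hxu.ge fun v hvS => ?_)
  rcases hv v hvS with rfl | rfl
  exacts [hx1, hx2]

lemma core_extraction (S : Finset E3) (u : E3) (hu0 : u ≠ 0) (hQ : Good u S) :
    ∃ R, R ⊆ S ∧ R.card ≤ 5 ∧ Good u R := by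
  classical
  have huS : u ∈ coneOf S := by
    by_contra h
    obtain ⟨y, hy1, hy2⟩ := farkas S u h
    have hy0 := hQ y hy2.le hy1
    rw [hy0] at hy2
    simp at hy2
  obtain ⟨f, hf, hfeq⟩ := huS
  obtain ⟨T, hTS, hTind, g, hgpos, hgsum⟩ := cone_cara S.card S le_rfl f hf
  have hgT : ∑ v ∈ T, g v • v = u := by rw [hgsum, ← hfeq]
  have hTcard : T.card ≤ 3 := by
    have h := LinearIndependent.finset_card_le_finrank hTind
    rwa [finrank_euclideanSpace_fin] at h
  have hTne : T.Nonempty := by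
    rcases Finset.eq_empty_or_nonempty T with h | h
    · rw [h, Finset.sum_empty] at hgT; exact absurd hgT hu0.symm
    · exact h
  have hTzero : ∀ x : E3, 0 ≤ ⟪u, x⟫ → (∀ v ∈ T, ⟪v, x⟫ ≤ 0) → ∀ v ∈ T, ⟪v, x⟫ = 0 := by
    intro x hux hvx
    refine pos_comb_zero hgpos hvx ?_
    rw [← inner_sum_smul, hgT]
    exact hux
  have hcard3 : T.card = 1 ∨ T.card = 2 ∨ T.card = 3 := by
    have := Finset.card_pos.mpr hTne; omega
  rcases hcard3 with hc | hc | hc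
  · -- T = {a}
    obtain ⟨a, hTa⟩ := Finset.card_eq_one.mp hc
    subst hTa
    have haS : a ∈ S := hTS (Finset.mem_singleton_self a)
    have hga : 0 < g a := hgpos a (Finset.mem_singleton_self a)
    have hua : g a • a = u := by rw [← hgT, Finset.sum_singleton]
    set P := (ℝ ∙ u)ᗮ with hPdef
    have hPrank : finrank ℝ P = 2 := by
      have := (ℝ ∙ u).finrank_add_finrank_orthogonal
      rw [finrank_span_singleton hu0, finrank_euclideanSpace_fin, ← hPdef] at this
      omega
    have hπ : ∀ (v y : E3), y ∈ P → ⟪(orthogonalProjection P v : E3), y⟫ = ⟪v, y⟫ := by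
      intro v y hy
      have h1 : v - (orthogonalProjection P v : E3) ∈ Pᗮ :=
        sub_starProjection_mem_orthogonal v
      have h2 := inner_left_of_mem_orthogonal hy h1
      rw [inner_sub_left] at h2
      linarith
    have hπP : ∀ v : E3, (orthogonalProjection P v : E3) ∈ P := fun v => Submodule.coe_mem _
    have hxPmem : ∀ x : E3, ⟪u, x⟫ = 0 → x ∈ P := fun x hx =>
      Submodule.mem_orthogonal_singleton_iff_inner_right.mpr hx
    have hPu : ∀ x : E3, x ∈ P → ⟪u, x⟫ = 0 := fun x hx =>
      inner_right_of_mem_orthogonal (Submodule.mem_span_singleton_self u) hx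
    have hstep : ∀ x : E3, 0 ≤ ⟪u, x⟫ → ⟪a, x⟫ ≤ 0 → (⟪a, x⟫ = 0 ∧ x ∈ P) := by
      intro x hux hax
      have h1 : ⟪u, x⟫ = g a * ⟪a, x⟫ := by rw [← hua, real_inner_smul_left]
      have h2 : ⟪a, x⟫ = 0 := by nlinarith
      exact ⟨h2, hxPmem x (by rw [h1, h2, mul_zero])⟩
    set W := S.image (fun v => (orthogonalProjection P v : E3)) with hWdef
    have hWP : ∀ w ∈ W, w ∈ P := by
      intro w hw
      rw [hWdef, Finset.mem_image] at hw
      obtain ⟨v, _, rfl⟩ := hw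
      exact hπP v
    obtain ⟨b, hbS, hb0⟩ : ∃ b ∈ S, (orthogonalProjection P b : E3) ≠ 0 := by
      by_contra h
      push_neg at h
      have hPne : P ≠ ⊥ := by
        intro hbot; rw [hbot, finrank_bot] at hPrank; omega
      obtain ⟨y, hyP, hy0⟩ := Submodule.exists_mem_ne_zero_of_ne_bot hPne
      refine hy0 (hQ y (hPu y hyP).ge fun v hv => ?_)
      rw [← hπ v y hyP, h v hv, inner_zero_left]
    have hmem : -(orthogonalProjection P b : E3) ∈ coneOf W := by
      by_contra h
      obtain ⟨y, hy1, hy2⟩ := farkas W _ h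
      set y' := (orthogonalProjection P y : E3) with hy'def
      have hy'P : y' ∈ P := hπP y
      have hvy' : ∀ v ∈ S, ⟪v, y'⟫ ≤ 0 := by
        intro v hv
        have e1 : ⟪v, y'⟫ = ⟪(orthogonalProjection P v : E3), y'⟫ := (hπ v y' hy'P).symm
        have e2 : ⟪y', (orthogonalProjection P v : E3)⟫ =
            ⟪y, (orthogonalProjection P v : E3)⟫ := hπ y _ (hπP v)
        have e3 := hy1 _ (Finset.mem_image_of_mem (fun v => (orthogonalProjection P v : E3)) hv)
        rw [e1, real_inner_comm, e2, real_inner_comm]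
        exact e3
      have hy2' : ⟪(orthogonalProjection P b : E3), y'⟫ < 0 := by
        have e2 : ⟪y', (orthogonalProjection P b : E3)⟫ =
            ⟪y, (orthogonalProjection P b : E3)⟫ := hπ y _ (hπP b)
        rw [inner_neg_left] at hy2
        rw [real_inner_comm, e2, real_inner_comm]
        linarith
      have := hQ y' (hPu y' hy'P).ge hvy'
      rw [this] at hy2'
      simp at hy2'
    obtain ⟨f', hf', hf'eq⟩ := hmem
    obtain ⟨T', hT'W, hT'ind, g', hg'pos, hg'sum⟩ := cone_cara W.card W le_rfl f' hf'
    have hg'T : ∑ w ∈ T', g' w • w = -(orthogonalProjection P b : E3) := by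
      rw [hg'sum, ← hf'eq]
    have hT'ne : T'.Nonempty := by
      rcases Finset.eq_empty_or_nonempty T' with h | h
      · rw [h, Finset.sum_empty] at hg'T
        exact absurd (neg_eq_zero.mp hg'T.symm) hb0
      · exact h
    have hT'P : (T' : Set E3) ⊆ (P : Set E3) := fun w hw => hWP w (hT'W hw)
    have hT'card : T'.card ≤ 2 := by
      have h1 : span ℝ (T' : Set E3) ≤ P := Submodule.span_le.2 hT'P
      have h2 := Submodule.finrank_mono h1
      rwa [finrank_span_finset_eq_card hT'ind, hPrank] at h2
    have hbx : ∀ x : E3, x ∈ P → ⟪b, x⟫ ≤ 0 → (∀ w ∈ T', ⟪w, x⟫ ≤ 0) →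
        ∀ w ∈ T', ⟪w, x⟫ = 0 := by
      intro x hxP' hbx' hwx
      have e1 : ⟪∑ w ∈ T', g' w • w, x⟫ = -⟪b, x⟫ := by
        rw [hg'T, inner_neg_left, hπ b x hxP']
      rw [inner_sum_smul] at e1
      refine pos_comb_zero hg'pos hwx ?_
      rw [e1]
      linarith
    have hc' : T'.card = 1 ∨ T'.card = 2 := by
      have := Finset.card_pos.mpr hT'ne; omega
    rcases hc' with hc' | hc'
    · -- T' = {w₁} : need five hemispheres a, b, c, p, q
      obtain ⟨w₁, hT'eq⟩ := Finset.card_eq_one.mp hc'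
      have hw₁W : w₁ ∈ W := hT'W (by rw [hT'eq]; simp)
      obtain ⟨c, hcS, hc_eq⟩ := Finset.mem_image.mp (by rw [hWdef] at hw₁W; exact hw₁W)
      have hw₁0 : w₁ ≠ 0 := by
        intro h0
        rw [hT'eq, Finset.sum_singleton, h0, smul_zero] at hg'T
        exact hb0 (neg_eq_zero.mp hg'T.symm)
      have hw₁P : w₁ ∈ P := hWP w₁ hw₁W
      have huw₁ : ⟪u, w₁⟫ = 0 := hPu w₁ hw₁P
      have h2 : finrank ℝ (span ℝ (({u, w₁} : Finset E3) : Set E3)) = 2 := by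
        have hind : LinearIndependent ℝ ![u, w₁] := by
          rw [linearIndependent_fin2]
          refine ⟨by simpa using hw₁0, fun s hs => ?_⟩
          simp only [Matrix.cons_val_one, Matrix.head_cons, Matrix.cons_val_zero] at hs
          apply hu0
          have huu : ⟪u, s • w₁⟫ = 0 := by
            rw [real_inner_smul_right, huw₁, mul_zero]
          rw [hs] at huu
          exact inner_self_eq_zero.mp huu
        have hr := finrank_span_eq_card hind
        have hrange : Set.range ![u, w₁] = (({u, w₁} : Finset E3) : Set E3) := by
          simp only [Matrix.range_cons, Matrix.range_cons_empty, Set.singleton_union,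
            Finset.coe_insert, Finset.coe_singleton]
          simp
        rw [hrange] at hr
        rw [hr]
        simp
      obtain ⟨m, hm0, hmV, hmline⟩ := line_lemma h2
      have hum : ⟪u, m⟫ = 0 := hmV u (Finset.mem_insert_self _ _)
      have hw₁m : ⟪w₁, m⟫ = 0 := hmV w₁ (by simp)
      obtain ⟨p, hpS, hpm⟩ : ∃ p ∈ S, 0 < ⟪p, m⟫ := by
        by_contra h; push_neg at h
        exact hm0 (hQ m hum.ge h)
      obtain ⟨q, hqS, hqm⟩ : ∃ q ∈ S, ⟪q, m⟫ < 0 := by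
        by_contra h; push_neg at h
        have hm' := hQ (-m) (by rw [inner_neg_right, hum, neg_zero])
          (fun v hv => by rw [inner_neg_right]; linarith [h v hv])
        exact hm0 (by simpa using hm')
      refine ⟨insert a (insert b (insert c (insert p {q}))), ?_, ?_, ?_⟩
      · intro v hv
        simp only [Finset.mem_insert, Finset.mem_singleton] at hv
        rcases hv with rfl | rfl | rfl | rfl | rfl
        exacts [haS, hbS, hcS, hpS, hqS]
      · have h1 := Finset.card_insert_le a (insert b (insert c (insert p {q})))
        have h2' := Finset.card_insert_le b (insert c (insert p {q}))
        have h3 := Finset.card_insert_le c (insert p {q})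
        have h4 := Finset.card_insert_le p ({q} : Finset E3)
        have h5 : ({q} : Finset E3).card = 1 := Finset.card_singleton q
        omega
      · intro x hux hvx
        have hax : ⟪a, x⟫ ≤ 0 := hvx a (by simp)
        obtain ⟨-, hxP'⟩ := hstep x hux hax
        have hbx' : ⟪b, x⟫ ≤ 0 := hvx b (by simp)
        have hwx : ∀ w ∈ T', ⟪w, x⟫ ≤ 0 := by
          intro w hw
          rw [hT'eq, Finset.mem_singleton] at hw
          subst hw
          rw [← hc_eq, hπ c x hxP']
          exact hvx c (by simp)
        have hz := hbx x hxP' hbx' hwx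
        have hw₁x : ⟪w₁, x⟫ = 0 := hz w₁ (by rw [hT'eq]; simp)
        have hux0 : ⟪u, x⟫ = 0 := hPu x hxP'
        obtain ⟨t, rfl⟩ := hmline x (fun v hv => by
          rcases Finset.mem_insert.mp hv with rfl | hv'
          · exact hux0
          · rw [Finset.mem_singleton.mp hv']; exact hw₁x)
        have hpx := hvx p (by simp)
        have hqx := hvx q (by simp)
        rw [real_inner_smul_right] at hpx hqx
        have ht1 : t ≤ 0 := by
          by_contra hcon; push_neg at hcon
          have := mul_pos hcon hpm; linarith
        have ht2 : 0 ≤ t := by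
          by_contra hcon; push_neg at hcon
          have := mul_pos_of_neg_of_neg hcon hqm; linarith
        rw [le_antisymm ht1 ht2, zero_smul]
    · -- T' = {w₁, w₂} : four hemispheres a, b, c, d
      obtain ⟨w₁, w₂, hw12, hT'eq⟩ := Finset.card_eq_two.mp hc'
      have hw₁W : w₁ ∈ W := hT'W (by rw [hT'eq]; simp)
      have hw₂W : w₂ ∈ W := hT'W (by rw [hT'eq]; simp)
      obtain ⟨c, hcS, hc_eq⟩ := Finset.mem_image.mp (by rw [hWdef] at hw₁W; exact hw₁W)
      obtain ⟨d, hdS, hd_eq⟩ := Finset.mem_image.mp (by rw [hWdef] at hw₂W; exact hw₂W)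
      refine ⟨insert a (insert b (insert c {d})), ?_, ?_, ?_⟩
      · intro v hv
        simp only [Finset.mem_insert, Finset.mem_singleton] at hv
        rcases hv with rfl | rfl | rfl | rfl
        exacts [haS, hbS, hcS, hdS]
      · have h1 := Finset.card_insert_le a (insert b (insert c {d}))
        have h2' := Finset.card_insert_le b (insert c {d})
        have h3 := Finset.card_insert_le c ({d} : Finset E3)
        have h4 : ({d} : Finset E3).card = 1 := Finset.card_singleton d
        omega
      · intro x hux hvx
        have hax : ⟪a, x⟫ ≤ 0 := hvx a (by simp)
        obtain ⟨-, hxP'⟩ := hstep x hux hax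
        have hbx' : ⟪b, x⟫ ≤ 0 := hvx b (by simp)
        have hwx : ∀ w ∈ T', ⟪w, x⟫ ≤ 0 := by
          intro w hw
          rw [hT'eq] at hw
          rcases Finset.mem_insert.mp hw with rfl | hw'
          · rw [← hc_eq, hπ c x hxP']; exact hvx c (by simp)
          · rw [Finset.mem_singleton.mp hw', ← hd_eq, hπ d x hxP']
            exact hvx d (by simp)
        have hz := hbx x hxP' hbx' hwx
        have hspan : span ℝ (T' : Set E3) = P := by
          apply Submodule.eq_of_le_of_finrank_le (Submodule.span_le.2 hT'P)
          rw [finrank_span_finset_eq_card hT'ind, hc', hPrank]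
        have hxorth : x ∈ Pᗮ := by
          rw [← hspan]
          exact mem_orth_of_forall hz
        exact Submodule.disjoint_def.mp (Submodule.orthogonal_disjoint P) x hxP' hxorth
  · -- T.card = 2 : four hemispheres T ∪ {p, q}
    have h2 : finrank ℝ (span ℝ (T : Set E3)) = 2 := by
      rw [finrank_span_finset_eq_card hTind, hc]
    obtain ⟨m, hm0, hmT, hmline⟩ := line_lemma h2
    have hum : ⟪u, m⟫ = 0 := by
      rw [← hgT, inner_sum_smul]
      exact Finset.sum_eq_zero fun v hv => by rw [hmT v hv, mul_zero]
    obtain ⟨p, hpS, hpm⟩ : ∃ p ∈ S, 0 < ⟪p, m⟫ := by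
      by_contra h; push_neg at h
      exact hm0 (hQ m hum.ge h)
    obtain ⟨q, hqS, hqm⟩ : ∃ q ∈ S, ⟪q, m⟫ < 0 := by
      by_contra h; push_neg at h
      have hm' := hQ (-m) (by rw [inner_neg_right, hum, neg_zero])
        (fun v hv => by rw [inner_neg_right]; linarith [h v hv])
      exact hm0 (by simpa using hm')
    refine ⟨insert p (insert q T), ?_, ?_, ?_⟩
    · exact Finset.insert_subset hpS (Finset.insert_subset hqS hTS)
    · have h1 := Finset.card_insert_le p (insert q T)
      have h2' := Finset.card_insert_le q T
      omega
    · intro x hux hvx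
      have hvT : ∀ v ∈ T, ⟪v, x⟫ ≤ 0 := fun v hv =>
        hvx v (Finset.mem_insert_of_mem (Finset.mem_insert_of_mem hv))
      have hz := hTzero x hux hvT
      obtain ⟨t, rfl⟩ := hmline x hz
      have hpx := hvx p (Finset.mem_insert_self _ _)
      have hqx := hvx q (by simp)
      rw [real_inner_smul_right] at hpx hqx
      have ht1 : t ≤ 0 := by
        by_contra hcon; push_neg at hcon
        have := mul_pos hcon hpm; linarith
      have ht2 : 0 ≤ t := by
        by_contra hcon; push_neg at hcon
        have := mul_pos_of_neg_of_neg hcon hqm; linarith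
      rw [le_antisymm ht1 ht2, zero_smul]
  · -- T.card = 3 : three hemispheres
    refine ⟨T, hTS, by omega, ?_⟩
    intro x hux hvx
    have hz := hTzero x hux hvx
    have hspan : span ℝ (T : Set E3) = ⊤ := by
      apply Submodule.eq_top_of_finrank_eq
      rw [finrank_span_finset_eq_card hTind, hc, finrank_euclideanSpace_fin]
    have hxmem := mem_orth_of_forall hz
    rwa [hspan, Submodule.top_orthogonal_eq_bot, Submodule.mem_bot] at hxmem

end MainSec

noncomputable section FinalSec

local notation "E3" => EuclideanSpace ℝ (Fin 3)

/-- If a finite set of open unit hemispheres covers a closed unit hemisphere,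
then three, four or five of them already cover it. -/

theorem hemispheres_cover_closed_hemisphere
    (S : Finset (EuclideanSpace ℝ (Fin 3))) (hS : ∀ v ∈ S, ‖v‖ = 1)
    (u : EuclideanSpace ℝ (Fin 3)) (hu : ‖u‖ = 1)
    (hcover : closedHemisphere u ⊆ ⋃ v ∈ S, openHemisphere v) :
    ∃ R ⊆ S, (R.card = 3 ∨ R.card = 4 ∨ R.card = 5) ∧
      closedHemisphere u ⊆ ⋃ v ∈ R, openHemisphere v := by
  classical
  have hu0 : u ≠ 0 := fun h => by rw [h, norm_zero] at hu; exact zero_ne_one hu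
  have hQ : Good u S := by
    intro x hux hvx
    by_contra hx0
    have hxnorm : (0:ℝ) < ‖x‖ := norm_pos_iff.2 hx0
    have hxs : ‖x‖⁻¹ • x ∈ closedHemisphere u := by
      refine ⟨?_, ?_⟩
      · show ‖x‖⁻¹ • x ∈ Metric.sphere (0 : E3) 1
        rw [mem_sphere_zero_iff_norm, norm_smul, norm_inv, norm_norm]
        field_simp
      · rw [real_inner_smul_right]
        exact mul_nonneg (by positivity) hux
    obtain ⟨v, hvS, hvmem⟩ := Set.mem_iUnion₂.mp (hcover hxs)
    have hvx' : (0:ℝ) < ⟪v, ‖x‖⁻¹ • x⟫ := hvmem.2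
    rw [real_inner_smul_right] at hvx'
    nlinarith [hvx v hvS, inv_pos.2 hxnorm]
  obtain ⟨R₀, hR₀S, hR₀card, hR₀good⟩ := core_extraction S u hu0 hQ
  have hS3 := card_ge_three hu0 hQ
  set n := max R₀.card 3 with hn
  have h1 : R₀.card ≤ n := le_max_left _ _
  have h2 : n ≤ S.card := max_le (Finset.card_le_card hR₀S) hS3
  obtain ⟨R, hR₀R, hRS, hRcard⟩ := Finset.exists_subsuperset_card_eq hR₀S h1 h2
  refine ⟨R, hRS, ?_, ?_⟩
  · have h3 : 3 ≤ n := le_max_right _ _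
    have h4 : n ≤ 5 := max_le hR₀card (by norm_num)
    omega
  · have hgood := good_mono hR₀R hR₀good
    intro x hx
    obtain ⟨hx1, hx2⟩ := hx
    have hxn : ‖x‖ = 1 := mem_sphere_zero_iff_norm.mp hx1
    by_contra hcon
    have hall : ∀ v ∈ R, ⟪v, x⟫ ≤ 0 := by
      intro v hv
      by_contra hvc
      push_neg at hvc
      exact hcon (Set.mem_iUnion₂.mpr ⟨v, hv, hx1, hvc⟩)
    have hx0 := hgood x hx2 hall
    rw [hx0, norm_zero] at hxn
    exact zero_ne_one hxn

end FinalSec
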